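/- Assume C² − D² + E² + F² − 2CEF = 1 and F² ≠ 1. Let G(p,q) = F(1+p²q²) − C(p²+q²) + 2Dpq, and let p, q be defined from y, z by the elliptic addition formulas with modulus E (so pq = (y²−z²)/(1−y²z²), p²+q² = 2((1+y²z²)(y²+z²)−4Ey²z²)/(1−y²z²)², Δ(p)Δ(q) = −((1+y²z²)² − 2E(1+y²z²)(y²+z²)+(y²+z²)²)/(1−y²z²)²). Then 2G(p,q) + 2Δ(p)Δ(q) = (2(F−1)/(1−y²z²)²)·(1 − 2E₁y² + y⁴)(1 − 2E₄z² + z⁴), where E₁ = (C−E−D)/(F−1) and E₄ = (C−E+D)/(F−1). -/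

import Mathlib

set_option maxHeartbeats 2000000 in
theorem stmt11 (C D E F y z p q Δp Δq : ℂ)
    (hconstraint : C^2 - D^2 + E^2 + F^2 - 2*C*E*F = 1)
    (hF : F ≠ 1) (h : 1 - y^2*z^2 ≠ 0)
    (hpq : p * q = (y^2 - z^2) / (1 - y^2*z^2))
    (hsum : p^2 + q^2 = 2 * ((1 + y^2*z^2) * (y^2 + z^2) - 4*E*y^2*z^2) / (1 - y^2*z^2)^2)
    (hΔ : Δp * Δq = -((1 + y^2*z^2)^2 - 2*E*(1 + y^2*z^2)*(y^2 + z^2) + (y^2 + z^2)^2)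
      / (1 - y^2*z^2)^2) :
    2 * (F*(1 + p^2*q^2) - C*(p^2 + q^2) + 2*D*p*q) + 2 * Δp * Δq =
      (2*(F - 1) / (1 - y^2*z^2)^2) *
        ((1 - 2*((C - E - D)/(F - 1))*y^2 + y^4) * (1 - 2*((C - E + D)/(F - 1))*z^2 + z^4)) := by
  have hF' : F - 1 ≠ 0 := sub_ne_zero.mpr hF
  have e1 : p^2*q^2 = (y^2-z^2)^2 / (1-y^2*z^2)^2 := by
    rw [← mul_pow, hpq, div_pow]
  calc 2 * (F*(1 + p^2*q^2) - C*(p^2 + q^2) + 2*D*p*q) + 2 * Δp * Δq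
      = 2 * (F*(1 + (y^2-z^2)^2 / (1-y^2*z^2)^2)
          - C*(2 * ((1 + y^2*z^2) * (y^2 + z^2) - 4*E*y^2*z^2) / (1 - y^2*z^2)^2)
          + 2*D*((y^2 - z^2) / (1 - y^2*z^2)))
        + 2 * (-((1 + y^2*z^2)^2 - 2*E*(1 + y^2*z^2)*(y^2 + z^2) + (y^2 + z^2)^2)
          / (1 - y^2*z^2)^2) := by
        rw [e1, hsum, mul_assoc 2 Δp Δq, hΔ, mul_assoc (2*D) p q, hpq]
    _ = (2*(F - 1) / (1 - y^2*z^2)^2) *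
        ((1 - 2*((C - E - D)/(F - 1))*y^2 + y^4) * (1 - 2*((C - E + D)/(F - 1))*z^2 + z^4)) := by
        field_simp
        linear_combination (-4*y^2*z^2) * hconstraint
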